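/- arXiv:2103.11665 — 3 statements merged into one kernel-verified Lean document; each statement's English description precedes it below -/
import Mathlib

section
/- Suppose n is even and A = {a_1,…,a_n} is a subset of F_q (q odd) such that the quadratic character values η(δ_A(a_i)) are all equal. Then there exist nonzero v_1,…,v_n in F_q with v_i^2 = λ·δ_A(a_i)^{-1} for some fixed λ ∈ F_q^*, such that the generalized Reed–Solomon code GRS_{n/2}(A, v) is Euclidean self-dual. In particular, a q-ary MDS self-dual code of length n exists. -/
open Finset

variable {F : Type*} [Field F]

/-- `δ_A(aᵢ)` for a listed set `a : Fin n → F`. -/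
noncomputable def delta {n : ℕ} (a : Fin n → F) (i : Fin n) : F :=
  ∏ j ∈ Finset.univ.erase i, (a i - a j)

/-- `δ_S(x)` for a finite set `S ⊆ F`. -/
noncomputable def deltaSet [DecidableEq F] (S : Finset F) (x : F) : F :=
  ∏ y ∈ S.erase x, (x - y)

/-- Euclidean dual of a linear code. -/
def dualCode {n : ℕ} (C : Submodule F (Fin n → F)) : Submodule F (Fin n → F) where
  carrier := {x | ∀ y ∈ C, ∑ i, x i * y i = 0}
  add_mem' := by
    intro x y hx hy z hz
    simp [add_mul, Finset.sum_add_distrib, hx z hz, hy z hz]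
  zero_mem' := by intro y hy; simp
  smul_mem' := by
    intro c x hx y hy
    simp [smul_eq_mul, mul_assoc, ← Finset.mul_sum, hx y hy]

/-- Hamming weight. -/
noncomputable def wt {n : ℕ} (c : Fin n → F) : ℕ := Nat.card {i // c i ≠ 0}

/-- `C` is an `[n, k, n-k+1]` MDS code. -/
noncomputable def IsMDSCode {n : ℕ} (C : Submodule F (Fin n → F)) (k : ℕ) : Prop :=
  Module.finrank F C = k ∧ ∀ c ∈ C, c ≠ 0 → n - k + 1 ≤ wt c

noncomputable def GRSmap {n : ℕ} (a v : Fin n → F) : Polynomial F →ₗ[F] (Fin n → F) where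
  toFun f := fun i => v i * Polynomial.eval (a i) f
  map_add' f g := by funext i; simp [mul_add]
  map_smul' c f := by funext i; simp [Polynomial.eval_smul]; ring

/-- Generalized Reed–Solomon code `GRS_k(A, v)`. -/
noncomputable def GRS {n : ℕ} (k : ℕ) (a v : Fin n → F) : Submodule F (Fin n → F) :=
  Submodule.map (GRSmap a v) (Polynomial.degreeLT F k)

noncomputable def GRSextMap {n : ℕ} (k : ℕ) (a v : Fin n → F) :
    Polynomial F →ₗ[F] (Fin (n+1) → F) where
  toFun f := fun i =>
    if h : (i : ℕ) < n then v ⟨i, h⟩ * Polynomial.eval (a ⟨i, h⟩) f else f.coeff (k - 1)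
  map_add' f g := by
    funext i
    by_cases h : (i : ℕ) < n <;> simp [h, mul_add]
  map_smul' c f := by
    funext i
    by_cases h : (i : ℕ) < n <;> simp [h, Polynomial.eval_smul] <;> ring

/-- Extended generalized Reed–Solomon code `GRS_k(A ∪ {∞}, v)`. -/
noncomputable def GRSext {n : ℕ} (k : ℕ) (a v : Fin n → F) : Submodule F (Fin (n+1) → F) :=
  Submodule.map (GRSextMap k a v) (Polynomial.degreeLT F k)

lemma delta_ne_zero {n : ℕ} (a : Fin n ↪ F) (i : Fin n) : delta ⇑a i ≠ 0 := by
  rw [delta, Finset.prod_ne_zero_iff]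
  intro j hj
  exact sub_ne_zero_of_ne (a.injective.ne (Finset.ne_of_mem_erase hj).symm)

lemma leadingCoeff_lagrange_basis {n : ℕ} (a : Fin n ↪ F) (i : Fin n) :
    (Lagrange.basis Finset.univ ⇑a i).leadingCoeff = (delta ⇑a i)⁻¹ := by
  classical
  rw [Lagrange.basis, Polynomial.leadingCoeff_prod, delta, ← Finset.prod_inv_distrib]
  refine Finset.prod_congr rfl fun j hj => ?_
  have hne : a i ≠ a j := fun h => (Finset.ne_of_mem_erase hj).symm (a.injective h)
  rw [Lagrange.basisDivisor, Polynomial.leadingCoeff_mul, Polynomial.leadingCoeff_C,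
    (Polynomial.monic_X_sub_C (a j)).leadingCoeff, mul_one]

lemma key_sum {n : ℕ} (a : Fin n ↪ F) (p : Polynomial F)
    (hp : p.degree < ((n - 1 : ℕ) : WithBot ℕ)) :
    ∑ i, (delta ⇑a i)⁻¹ * p.eval (a i) = 0 := by
  classical
  rcases Nat.eq_zero_or_pos n with h0 | h1
  · subst h0; simp
  have hinj : Set.InjOn ⇑a (Finset.univ : Finset (Fin n)) := a.injective.injOn
  have hcard : #(Finset.univ : Finset (Fin n)) = n := by simp
  have hdeg : p.degree < (#(Finset.univ : Finset (Fin n)) : ℕ) := by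
    rw [hcard]
    exact hp.trans_le (Nat.cast_le.mpr (Nat.sub_le n 1))
  have hint := Lagrange.eq_interpolate hinj hdeg
  have hco := congrArg (fun q => Polynomial.coeff q (n - 1)) hint
  simp only [Polynomial.coeff_eq_zero_of_degree_lt hp, Lagrange.interpolate_apply,
    Polynomial.finset_sum_coeff, Polynomial.coeff_C_mul] at hco
  rw [eq_comm] at hco
  calc ∑ i, (delta ⇑a i)⁻¹ * p.eval (a i)
      = ∑ i, p.eval (a i) * (Lagrange.basis Finset.univ ⇑a i).coeff (n - 1) := by
        refine Finset.sum_congr rfl fun i _ => ?_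
        have hnd : (Lagrange.basis Finset.univ ⇑a i).natDegree = n - 1 := by
          rw [Lagrange.natDegree_basis hinj (Finset.mem_univ i), hcard]
        rw [← hnd, Polynomial.coeff_natDegree, leadingCoeff_lagrange_basis, mul_comm]
    _ = 0 := hco

lemma finrank_GRS {n k : ℕ} (hk : k ≤ n) (a : Fin n ↪ F) (v : Fin n → F)
    (hv : ∀ i, v i ≠ 0) : Module.finrank F (GRS k ⇑a v) = k := by
  classical
  have hGRS : GRS k ⇑a v =
      LinearMap.range ((GRSmap ⇑a v).comp (Polynomial.degreeLT F k).subtype) := by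
    rw [LinearMap.range_comp, Submodule.range_subtype]; rfl
  have hfd : FiniteDimensional F (Polynomial.degreeLT F k) :=
    LinearEquiv.finiteDimensional (Polynomial.degreeLTEquiv F k).symm
  have hdim : Module.finrank F (Polynomial.degreeLT F k) = k := by
    rw [(Polynomial.degreeLTEquiv F k).finrank_eq, Module.finrank_fin_fun]
  have hker : LinearMap.ker ((GRSmap ⇑a v).comp (Polynomial.degreeLT F k).subtype) = ⊥ := by
    rw [LinearMap.ker_eq_bot']
    rintro ⟨f, hf⟩ h0
    have heval : ∀ i, f.eval (a i) = 0 := by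
      intro i
      have := congrFun h0 i
      simpa using (mul_eq_zero.mp this).resolve_left (hv i)
    ext1
    by_cases hfz : f = 0
    · simpa using hfz
    · simp only [Submodule.coe_zero]
      refine f.eq_zero_of_natDegree_lt_card_of_eval_eq_zero a.injective heval ?_
      rw [Fintype.card_fin]
      have : f.natDegree < k := by
        rw [Polynomial.natDegree_lt_iff_degree_lt hfz]
        exact_mod_cast Polynomial.mem_degreeLT.mp hf
      omega
  have := LinearMap.finrank_range_add_finrank_ker
    ((GRSmap ⇑a v).comp (Polynomial.degreeLT F k).subtype)
  rw [hker, finrank_bot, add_zero, hdim] at this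
  rw [hGRS, this]

noncomputable def dotB (F : Type*) [Field F] (n : ℕ) : LinearMap.BilinForm F (Fin n → F) :=
  LinearMap.mk₂ F (fun x y => ∑ i, x i * y i)
    (fun x x' y => by simp [add_mul, Finset.sum_add_distrib])
    (fun c x y => by simp [Finset.mul_sum, mul_assoc])
    (fun x y y' => by simp [mul_add, Finset.sum_add_distrib])
    (fun c x y => by simp [Finset.mul_sum, mul_left_comm])

lemma dotB_apply {n : ℕ} (x y : Fin n → F) : dotB F n x y = ∑ i, x i * y i := rfl

lemma dotB_refl {n : ℕ} : (dotB F n).IsRefl := by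
  intro x y h
  simpa [dotB_apply, mul_comm] using h

lemma dotB_nondeg {n : ℕ} : (dotB F n).Nondegenerate := by
  refine ⟨fun x hx => ?_, fun x hx => ?_⟩
  · funext j
    have := hx (Pi.single j 1)
    simpa [dotB_apply, Pi.single_apply, mul_ite, Finset.sum_ite_eq'] using this
  · funext j
    have := hx (Pi.single j 1)
    simpa [dotB_apply, Pi.single_apply, ite_mul, Finset.sum_ite_eq'] using this

lemma dualCode_eq_orthogonal {n : ℕ} (C : Submodule F (Fin n → F)) :
    dualCode C = (dotB F n).orthogonal C := by
  ext x
  constructor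
  · intro hx y hy
    have := hx y hy
    simpa [LinearMap.BilinForm.IsOrtho, dotB_apply, mul_comm] using this
  · intro hx y hy
    have := hx y hy
    simpa [LinearMap.BilinForm.IsOrtho, dotB_apply, mul_comm] using this

lemma finrank_dualCode {n : ℕ} (C : Submodule F (Fin n → F)) :
    Module.finrank F (dualCode C) = n - Module.finrank F C := by
  rw [dualCode_eq_orthogonal,
    LinearMap.BilinForm.finrank_orthogonal dotB_nondeg, Module.finrank_fin_fun]

lemma isSquare_mul_inv_of_iff {F : Type*} [Field F] [Fintype F] {x y : F} (hx : x ≠ 0)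
    (hy : y ≠ 0) (h : IsSquare x ↔ IsSquare y) : IsSquare (x * y⁻¹) := by
  classical
  have hxy : IsSquare (x * y) := by
    by_cases hs : IsSquare x
    · exact hs.mul (h.mp hs)
    · have h1 : quadraticChar F x = -1 := quadraticChar_neg_one_iff_not_isSquare.mpr hs
      have h2 : quadraticChar F y = -1 :=
        quadraticChar_neg_one_iff_not_isSquare.mpr fun hsy => hs (h.mpr hsy)
      have hq : quadraticChar F (x * y) = 1 := by rw [map_mul, h1, h2]; ring
      exact (quadraticChar_one_iff_isSquare (mul_ne_zero hx hy)).mp hq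
  have hrw : x * y⁻¹ = x * y * (y⁻¹) ^ 2 := by
    rw [pow_two]; field_simp
  rw [hrw]
  exact hxy.mul (IsSquare.sq _)

lemma wt_GRS {n k : ℕ} (hk : k ≤ n) (a : Fin n ↪ F) (v : Fin n → F) (hv : ∀ i, v i ≠ 0)
    (c : Fin n → F) (hc : c ∈ GRS k ⇑a v) (hc0 : c ≠ 0) : n - k + 1 ≤ wt c := by
  classical
  obtain ⟨f, hf, rfl⟩ := hc
  have hfd : f.degree < (k : WithBot ℕ) := Polynomial.mem_degreeLT.mp hf
  have hfz : f ≠ 0 := by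
    rintro rfl
    exact hc0 (by simp only [map_zero])
  have hk1 : 1 ≤ k := by
    by_contra hk0
    push_neg at hk0
    interval_cases k
    exact hfz (Polynomial.degree_eq_bot.mp (Nat.WithBot.lt_zero_iff.mp (by simpa using hfd)))
  have hnd : f.natDegree ≤ k - 1 := by
    have : f.natDegree < k := by
      rw [Polynomial.natDegree_lt_iff_degree_lt hfz]; exact_mod_cast hfd
    omega
  have hcount : #(univ.filter fun i => f.eval (a i) = 0) ≤ k - 1 :=
    calc #(univ.filter fun i => f.eval (a i) = 0)
        ≤ #f.roots.toFinset := by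
          apply Finset.card_le_card_of_injOn (fun i => a i)
          · intro i hi
            simp only [Finset.coe_filter, Finset.mem_filter, Set.mem_setOf_eq] at hi
            rw [Finset.mem_coe, Multiset.mem_toFinset, Polynomial.mem_roots hfz]
            exact hi.2
          · exact fun i _ j _ h => a.injective h
      _ ≤ Multiset.card f.roots := Multiset.toFinset_card_le _
      _ ≤ f.natDegree := Polynomial.card_roots' f
      _ ≤ k - 1 := hnd
  have hwt : wt ((GRSmap ⇑a v) f) = #(univ.filter fun i => ¬ f.eval (a i) = 0) := by
    rw [wt, Nat.card_eq_fintype_card, Fintype.card_subtype]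
    congr 1
    apply Finset.filter_congr
    intro i _
    simp [GRSmap, hv i]
  have hsplit := Finset.card_filter_add_card_filter_not
    (s := (univ : Finset (Fin n))) (p := fun i => f.eval (a i) = 0)
  rw [Finset.card_univ, Fintype.card_fin] at hsplit
  omega

/-- Lemma 2: if `n` is even and all `η(δ_A(aᵢ))` agree, there is a vector `v` with
`vᵢ² = λ δ_A(aᵢ)⁻¹` making `GRS_{n/2}(A, v)` Euclidean self-dual; in particular a
`q`-ary MDS self-dual code of length `n` exists. -/
theorem stmt2 {F : Type*} [Field F] [Fintype F] (hodd : Odd (Fintype.card F))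
    {n : ℕ} (hn : Even n) (a : Fin n ↪ F)
    (hη : ∀ i j : Fin n, IsSquare (delta ⇑a i) ↔ IsSquare (delta ⇑a j)) :
    ∃ v : Fin n → F, (∀ i, v i ≠ 0) ∧
      (∃ lam : F, lam ≠ 0 ∧ ∀ i, v i ^ 2 = lam * (delta ⇑a i)⁻¹) ∧
      GRS (n / 2) ⇑a v = dualCode (GRS (n / 2) ⇑a v) ∧
      IsMDSCode (GRS (n / 2) ⇑a v) (n / 2) := by
  classical
  rcases Nat.eq_zero_or_pos n with h0 | hpos
  · subst h0
    refine ⟨fun i => i.elim0, fun i => i.elim0, ⟨1, one_ne_zero, fun i => i.elim0⟩, ?_, ?_⟩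
    · haveI : Subsingleton (Submodule F (Fin 0 → F)) :=
        (Submodule.subsingleton_iff F).mpr inferInstance
      exact Subsingleton.elim _ _
    · exact ⟨finrank_GRS (by omega) a _ (fun i => i.elim0),
        fun c hc hc0 => wt_GRS (by omega) a _ (fun i => i.elim0) c hc hc0⟩
  obtain ⟨m, hm⟩ := hn
  set i0 : Fin n := ⟨0, hpos⟩
  set lam := delta ⇑a i0 with hlamdef
  have hlam : lam ≠ 0 := delta_ne_zero a i0
  have hsq : ∀ i, IsSquare (lam * (delta ⇑a i)⁻¹) := fun i =>
    isSquare_mul_inv_of_iff hlam (delta_ne_zero a i) (hη i0 i)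
  choose v hv using hsq
  have hv2 : ∀ i, v i ^ 2 = lam * (delta ⇑a i)⁻¹ := fun i => by
    rw [pow_two]; exact (hv i).symm
  have hvne : ∀ i, v i ≠ 0 := by
    intro i h
    have : lam * (delta ⇑a i)⁻¹ = 0 := by rw [hv i, h, mul_zero]
    exact (mul_ne_zero hlam (inv_ne_zero (delta_ne_zero a i))) this
  have hfr : Module.finrank F (GRS (n / 2) ⇑a v) = n / 2 :=
    finrank_GRS (by omega) a v hvne
  refine ⟨v, hvne, ⟨lam, hlam, hv2⟩, ?_, hfr, wt_GRS (by omega) a v hvne⟩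
  have hle : GRS (n / 2) ⇑a v ≤ dualCode (GRS (n / 2) ⇑a v) := by
    rintro x ⟨f, hf, rfl⟩ y ⟨g, hg, rfl⟩
    have hf' : f.degree < ((n / 2 : ℕ) : WithBot ℕ) := Polynomial.mem_degreeLT.mp hf
    have hg' : g.degree < ((n / 2 : ℕ) : WithBot ℕ) := Polynomial.mem_degreeLT.mp hg
    have hfg : (f * g).degree < ((n - 1 : ℕ) : WithBot ℕ) := by
      rcases eq_or_ne f 0 with rfl | hf0
      · rw [zero_mul, Polynomial.degree_zero]; exact WithBot.bot_lt_coe _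
      rcases eq_or_ne g 0 with rfl | hg0
      · rw [mul_zero, Polynomial.degree_zero]; exact WithBot.bot_lt_coe _
      have hhalf : 1 ≤ n / 2 := by
        by_contra hc
        push_neg at hc
        interval_cases h : n / 2
        exact hf0 (Polynomial.degree_eq_bot.mp
          (Nat.WithBot.lt_zero_iff.mp (by simpa [h] using hf')))
      have hfn : f.natDegree < n / 2 := by
        rw [Polynomial.natDegree_lt_iff_degree_lt hf0]; exact_mod_cast hf'
      have hgn : g.natDegree < n / 2 := by
        rw [Polynomial.natDegree_lt_iff_degree_lt hg0]; exact_mod_cast hg'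
      calc (f * g).degree ≤ ((f.natDegree + g.natDegree : ℕ) : WithBot ℕ) := by
            rw [Nat.cast_add]
            exact (Polynomial.degree_mul_le f g).trans
              (add_le_add Polynomial.degree_le_natDegree Polynomial.degree_le_natDegree)
        _ < ((n - 1 : ℕ) : WithBot ℕ) := by
            rw [Nat.cast_lt]
            omega
    have hks := key_sum a (f * g) hfg
    show ∑ i, (GRSmap ⇑a v) f i * (GRSmap ⇑a v) g i = 0
    have hterm : ∀ i : Fin n, (GRSmap ⇑a v) f i * (GRSmap ⇑a v) g i =
        lam * ((delta ⇑a i)⁻¹ * (f * g).eval (a i)) := by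
      intro i
      have h2 : v i * v i = lam * (delta ⇑a i)⁻¹ := (hv i).symm
      show (v i * f.eval (a i)) * (v i * g.eval (a i)) = _
      rw [Polynomial.eval_mul]
      calc (v i * f.eval (a i)) * (v i * g.eval (a i))
          = (v i * v i) * (f.eval (a i) * g.eval (a i)) := by ring
        _ = lam * ((delta ⇑a i)⁻¹ * (f.eval (a i) * g.eval (a i))) := by rw [h2]; ring
    calc ∑ i, (GRSmap ⇑a v) f i * (GRSmap ⇑a v) g i
        = ∑ i, lam * ((delta ⇑a i)⁻¹ * (f * g).eval (a i)) :=
          Finset.sum_congr rfl fun i _ => hterm i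
      _ = lam * ∑ i, (delta ⇑a i)⁻¹ * (f * g).eval (a i) := by rw [Finset.mul_sum]
      _ = 0 := by rw [hks, mul_zero]
  refine Submodule.eq_of_le_of_finrank_le hle ?_
  rw [finrank_dualCode, hfr]
  omega
end

section
/- Let q = r^2 with r odd, θ a primitive element of F_q, and a, b divisors of q-1 with 2b | a(r-1). Set α = θ^a and γ = θ^{a/2} (a even). Then for all integers j, h, the element α^{j(q-1)/b} - γ^{(2h+1)(q-1)/b} lies in the subfield F_r, and hence is a square in F_q whenever it is nonzero. -/
/-- Let `q = r²` with `r` odd, `θ` primitive, `a, b ∣ q - 1`, `a` even, `2b ∣ a(r-1)`,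
`α = θ^a`, `γ = θ^{a/2}`. Then `α^{j(q-1)/b} - γ^{(2h+1)(q-1)/b}` lies in the subfield `F_r`
(it is fixed by the Frobenius `x ↦ x^r`), hence is a square in `F_q` whenever nonzero. -/
theorem stmt10 {F : Type*} [Field F] [Fintype F] {q r : ℕ} (hq : Fintype.card F = q)
    (hq2 : q = r ^ 2) (hr : Odd r) (θ : Fˣ) (hθ : ∀ x : Fˣ, x ∈ Subgroup.zpowers θ)
    {a b : ℕ} (ha : a ∣ q - 1) (hb : b ∣ q - 1) (hae : Even a)
    (hba : 2 * b ∣ a * (r - 1)) (j h : ℕ) :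
    ∀ x : F,
      x = ((θ : F) ^ a) ^ (j * ((q - 1) / b))
            - ((θ : F) ^ (a / 2)) ^ ((2 * h + 1) * ((q - 1) / b)) →
      x ^ r = x ∧ (x ≠ 0 → IsSquare x) := by
  intro x hx
  have hcard : 1 < q := hq ▸ Fintype.one_lt_card
  have hq1 : 1 ≤ q - 1 := by omega
  have hr1 : 1 ≤ r := by
    rcases Nat.eq_zero_or_pos r with h0 | h0
    · simp [h0] at hq2; omega
    · exact h0
  -- b ≠ 0
  have hb0 : b ≠ 0 := by
    rintro rfl; simp at hb; omega
  obtain ⟨c, hc⟩ := hb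
  have hcval : (q - 1) / b = c := by rw [hc]; exact Nat.mul_div_cancel_left c (by omega)
  -- order of θ
  have hord : orderOf θ = q - 1 := by
    have := orderOf_eq_card_of_forall_mem_zpowers hθ
    rwa [Nat.card_units, Nat.card_eq_fintype_card, hq] at this
  -- fixedness lemma
  have key : ∀ e : ℕ, (q - 1) ∣ e * (r - 1) → ((θ : F) ^ e) ^ r = (θ : F) ^ e := by
    intro e hd
    have hu : (θ ^ e) ^ r = θ ^ e := by
      have h1 : θ ^ (e * (r - 1)) = 1 := by
        rw [← hord] at hd; exact orderOf_dvd_iff_pow_eq_one.mp hd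
      calc (θ ^ e) ^ r = θ ^ (e * (r - 1) + e) := by
            rw [← pow_mul]; congr 1
            have : e * r = e * (r - 1) + e * 1 := by
              rw [← Nat.mul_add]; congr 1; omega
            omega
        _ = θ ^ e := by rw [pow_add, h1, one_mul]
    calc ((θ : F) ^ e) ^ r = ((θ ^ e) ^ r : Fˣ) := by push_cast; ring
      _ = ((θ ^ e : Fˣ) : F) := by rw [hu]
      _ = (θ : F) ^ e := by push_cast; ring
  -- divisibilities
  obtain ⟨t, ht⟩ := hba
  obtain ⟨a₂, ha2⟩ := hae
  have ha2' : a = 2 * a₂ := by omega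
  have ha2r : a₂ * (r - 1) = b * t := by
    have h2 : 2 * (a₂ * (r - 1)) = 2 * (b * t) := by
      calc 2 * (a₂ * (r - 1)) = a * (r - 1) := by rw [ha2']; ring
        _ = 2 * b * t := ht
        _ = 2 * (b * t) := by ring
    omega
  have d1 : (q - 1) ∣ (a * (j * ((q - 1) / b))) * (r - 1) := by
    refine ⟨2 * t * j, ?_⟩
    rw [hcval]
    calc a * (j * c) * (r - 1) = j * c * (a * (r - 1)) := by ring
      _ = j * c * (2 * b * t) := by rw [ht]
      _ = b * c * (2 * t * j) := by ring
      _ = (q - 1) * (2 * t * j) := by rw [← hc]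
  have d2 : (q - 1) ∣ ((a / 2) * ((2 * h + 1) * ((q - 1) / b))) * (r - 1) := by
    refine ⟨(2 * h + 1) * t, ?_⟩
    rw [hcval]
    have haq : a / 2 = a₂ := by omega
    calc a / 2 * ((2 * h + 1) * c) * (r - 1) = (2 * h + 1) * c * (a₂ * (r - 1)) := by
          rw [haq]; ring
      _ = (2 * h + 1) * c * (b * t) := by rw [ha2r]
      _ = b * c * ((2 * h + 1) * t) := by ring
      _ = (q - 1) * ((2 * h + 1) * t) := by rw [← hc]
  -- rewrite x's powers into single powers
  have hx' : x = (θ : F) ^ (a * (j * ((q - 1) / b)))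
      - (θ : F) ^ ((a / 2) * ((2 * h + 1) * ((q - 1) / b))) := by
    rw [hx, ← pow_mul, ← pow_mul]
  -- r is a power of the characteristic
  set p := ringChar F with hpdef
  haveI : CharP F p := ringChar.charP F
  obtain ⟨n, hp, hcard'⟩ := FiniteField.card F p
  haveI : Fact p.Prime := ⟨hp⟩
  -- r = p ^ m
  have hrq : r ∣ q := hq2 ▸ dvd_pow_self r two_ne_zero
  have hrp : ∃ m : ℕ, r = p ^ m := by
    have : r ∣ p ^ (n : ℕ) := by rw [← hcard', hq]; exact hrq
    obtain ⟨m, _, hm⟩ := (Nat.dvd_prime_pow hp).mp this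
    exact ⟨m, hm⟩
  obtain ⟨m, hm⟩ := hrp
  -- x ^ r = x
  have hfix : x ^ r = x := by
    rw [hx', hm, sub_pow_char_pow, ← hm, key _ d1, key _ d2]
  refine ⟨hfix, ?_⟩
  intro hx0
  -- char ≠ 2 since q odd
  have hqodd : Odd q := hq2 ▸ hr.pow
  have hchar2 : ringChar F ≠ 2 := by
    intro h2
    have : (2 : ℕ) ∣ q := by
      rw [← hq, hcard', ← h2]
      exact dvd_pow_self _ n.pos.ne'
    exact (Nat.not_even_iff_odd.mpr hqodd) (even_iff_two_dvd.mpr this)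
  rw [FiniteField.isSquare_iff hchar2 hx0, hq]
  have hxr1 : x ^ (r - 1) = 1 := by
    have : x * x ^ (r - 1) = x * 1 := by
      rw [mul_one, ← pow_succ', ]
      have : r - 1 + 1 = r := by omega
      rw [this, hfix]
    exact mul_left_cancel₀ hx0 this
  have hhalf : q / 2 = (r - 1) * ((r + 1) / 2) := by
    obtain ⟨k, hk⟩ := hr
    have e1 : q = 4 * (k * k) + 4 * k + 1 := by rw [hq2, hk]; ring
    have e2 : r - 1 = 2 * k := by omega
    have e3 : (r + 1) / 2 = k + 1 := by omega
    rw [e1, e2, e3]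
    have e4 : 2 * k * (k + 1) = 2 * (k * k) + 2 * k := by ring
    omega
  rw [hhalf, pow_mul, hxr1, one_pow]
end

section
/- Let q = r^2 with r odd, θ a primitive element of F_q, and a, b even divisors of q-1 with 2a | b(r+1). Set β = θ^b and fix 0 ≤ i ≤ s-1 and 1 ≤ j ≤ (q-1)/a. Then the element w = ∏_{h=0}^{s-1}(β^{j(q-1)/a} + β^{h(q-1)/a}), if nonzero, is a square in F_q^*. -/
/-- Let `q = r²` with `r` odd, `θ` primitive, `a, b` even divisors of `q-1` with
`2a ∣ b(r+1)`, `β = θ^b`, and fix `0 ≤ i ≤ s - 1`, `1 ≤ j ≤ (q-1)/a`. Then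
`w = ∏_{h=0}^{s-1} (β^{j(q-1)/a} + β^{h(q-1)/a})`, if nonzero, is a square in `F_q^*`. -/
theorem stmt19 {F : Type*} [Field F] [Fintype F] {q r : ℕ} (hq : Fintype.card F = q)
    (hq2 : q = r ^ 2) (hr : Odd r) (θ : Fˣ) (hθ : ∀ x : Fˣ, x ∈ Subgroup.zpowers θ)
    {a b : ℕ} (hae : Even a) (hbe : Even b) (ha : a ∣ q - 1) (hb : b ∣ q - 1)
    (hab : 2 * a ∣ b * (r + 1))
    {s i j : ℕ} (hi : i ≤ s - 1) (hj1 : 1 ≤ j) (hj2 : j ≤ (q - 1) / a)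
    (hw : (∏ h ∈ Finset.range s,
        (((θ : F) ^ b) ^ (j * ((q - 1) / a)) + ((θ : F) ^ b) ^ (h * ((q - 1) / a)))) ≠ 0) :
    IsSquare (∏ h ∈ Finset.range s,
      (((θ : F) ^ b) ^ (j * ((q - 1) / a)) + ((θ : F) ^ b) ^ (h * ((q - 1) / a)))) := by
  classical
  set c : ℕ := (q - 1) / a with hc
  obtain ⟨k, hk⟩ := hr
  have hq1 : 2 ≤ q := hq ▸ Fintype.one_lt_card
  have hrodd : Odd r := ⟨k, hk⟩
  have hqodd : Odd q := by rw [hq2]; exact hrodd.pow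
  obtain ⟨m0, hm0⟩ := hqodd
  have hch : ringChar F ≠ 2 := by
    intro h
    have h2 := FiniteField.even_card_of_char_two h
    rw [hq] at h2
    omega
  set p := ringChar F with hpdef
  haveI : CharP F p := ringChar.charP F
  have hp : p.Prime := CharP.char_is_prime F p
  haveI : Fact p.Prime := ⟨hp⟩
  obtain ⟨n, -, hcard⟩ := FiniteField.card F p
  rw [hq] at hcard
  -- r is a power of p
  have hrq : r ∣ q := by rw [hq2, pow_two]; exact Dvd.intro_left r rfl
  obtain ⟨m, -, hrm⟩ := (Nat.dvd_prime_pow hp).mp (hcard ▸ hrq)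
  -- basic exponent facts
  have hca : c * a = q - 1 := Nat.div_mul_cancel ha
  obtain ⟨t, ht⟩ := hab
  have hbk : b * (k + 1) = a * t := by
    refine Nat.eq_of_mul_eq_mul_left (show 0 < 2 by norm_num) ?_
    calc 2 * (b * (k + 1)) = b * (r + 1) := by rw [hk]; ring
      _ = 2 * (a * t) := by rw [ht]; ring
  have hθ1 : (θ : F) ^ (q - 1) = 1 := by
    have := FiniteField.pow_card_sub_one_eq_one (θ : F) (Units.ne_zero θ)
    rwa [hq] at this
  have hone : ∀ d : ℕ, (q - 1) ∣ d → (θ : F) ^ d = 1 := by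
    rintro d ⟨u, rfl⟩
    rw [pow_mul, hθ1, one_pow]
  -- card F / 2
  have hqk : q = 4 * (k * k) + 4 * k + 1 := by rw [hq2, hk]; ring
  have hr1 : r - 1 = 2 * k := by omega
  have hrk : (r - 1) * (k + 1) = 2 * (k * k) + 2 * k := by rw [hr1]; ring
  have hq2div : q / 2 = (r - 1) * (k + 1) := by omega
  -- each nonzero factor is a square
  have key : ∀ h : ℕ,
      ((θ : F) ^ b) ^ (j * c) + ((θ : F) ^ b) ^ (h * c) ≠ 0 →
      IsSquare (((θ : F) ^ b) ^ (j * c) + ((θ : F) ^ b) ^ (h * c)) := by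
    intro h hW
    rw [FiniteField.isSquare_iff hch hW, hq, hq2div]
    set x : F := ((θ : F) ^ b) ^ (j * c) with hx
    set y : F := ((θ : F) ^ b) ^ (h * c) with hy
    have hxθ : x = (θ : F) ^ (b * (j * c)) := by rw [hx, ← pow_mul]
    have hyθ : y = (θ : F) ^ (b * (h * c)) := by rw [hy, ← pow_mul]
    have hx1 : x ^ (r + 1) = 1 := by
      rw [hxθ, ← pow_mul]
      refine hone _ ⟨2 * (j * t), ?_⟩
      calc b * (j * c) * (r + 1) = j * c * (b * (r + 1)) := by ring
        _ = j * c * (2 * a * t) := by rw [ht]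
        _ = c * a * (2 * (j * t)) := by ring
        _ = (q - 1) * (2 * (j * t)) := by rw [hca]
    have hy1 : y ^ (r + 1) = 1 := by
      rw [hyθ, ← pow_mul]
      refine hone _ ⟨2 * (h * t), ?_⟩
      calc b * (h * c) * (r + 1) = h * c * (b * (r + 1)) := by ring
        _ = h * c * (2 * a * t) := by rw [ht]
        _ = c * a * (2 * (h * t)) := by ring
        _ = (q - 1) * (2 * (h * t)) := by rw [hca]
    have hxy1 : (x * y) ^ (k + 1) = 1 := by
      rw [hxθ, hyθ, ← pow_add, ← pow_mul]
      refine hone _ ⟨(j + h) * t, ?_⟩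
      calc (b * (j * c) + b * (h * c)) * (k + 1) = (j + h) * c * (b * (k + 1)) := by ring
        _ = (j + h) * c * (a * t) := by rw [hbk]
        _ = c * a * ((j + h) * t) := by ring
        _ = (q - 1) * ((j + h) * t) := by rw [hca]
    -- Frobenius
    have hfrob : (x + y) ^ r = x ^ r + y ^ r := by
      rw [hrm]; exact add_pow_char_pow x y p m
    have hWr : (x + y) ^ r * (x * y) = x + y := by
      rw [hfrob]
      calc (x ^ r + y ^ r) * (x * y) = x ^ (r + 1) * y + y ^ (r + 1) * x := by
            rw [pow_succ, pow_succ]; ring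
        _ = x + y := by rw [hx1, hy1]; ring
    have hWr1 : (x + y) ^ (r - 1) * (x * y) = 1 := by
      refine mul_right_cancel₀ hW ?_
      have : (x + y) ^ (r - 1) * (x + y) = (x + y) ^ r := by
        rw [← pow_succ]
        congr 1
        omega
      calc (x + y) ^ (r - 1) * (x * y) * (x + y)
          = (x + y) ^ (r - 1) * (x + y) * (x * y) := by ring
        _ = (x + y) ^ r * (x * y) := by rw [this]
        _ = x + y := hWr
        _ = 1 * (x + y) := by rw [one_mul]
    have hfin : ((x + y) ^ (r - 1)) ^ (k + 1) * ((x * y)) ^ (k + 1) = 1 := by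
      rw [← mul_pow, hWr1, one_pow]
    rw [pow_mul]
    calc ((x + y) ^ (r - 1)) ^ (k + 1)
        = ((x + y) ^ (r - 1)) ^ (k + 1) * ((x * y)) ^ (k + 1) := by rw [hxy1, mul_one]
      _ = 1 := hfin
  refine Finset.prod_induction _ IsSquare (fun u v hu hv => hu.mul hv) IsSquare.one ?_
  intro h hh
  exact key h (Finset.prod_ne_zero_iff.mp hw h hh)
end
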